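/- Let (W,S) be a Coxeter system and let s_i, s_j, s_k be three distinct generators in S such that the orders m_{ij}, m_{ik}, m_{kj} of the products s_is_j, s_is_k, s_ks_j are each finite and odd. Then s_j s_k s_j and s_k s_i s_k s_i s_k generate an infinite dihedral group; equivalently, the element (s_j s_k s_j)·(s_k s_i s_k s_i s_k) has infinite order in W. -/

import Mathlib

open Real

namespace Statement7Aux

/-- Chebyshev-style lemma: the matrix of the rotation part of a dihedral pair of
reflections with angle `π / m` has order dividing `m`. -/
lemma R_pow_eq_one {m : ℕ} (hm : 2 ≤ m) :
    (!![4 * Real.cos (π / m) ^ 2 - 1, -(2 * Real.cos (π / m)); 2 * Real.cos (π / m), -1]) ^ m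
      = 1 := by
  set c := Real.cos (π / m) with hc
  rcases eq_or_lt_of_le hm with h2 | h3
  · have hc0 : c = 0 := by rw [hc, ← h2]; norm_num [Real.cos_pi_div_two]
    rw [← h2, pow_two, hc0]
    ext i j
    fin_cases i <;> fin_cases j <;>
      simp [Matrix.mul_apply, Fin.sum_univ_two, Matrix.one_apply]
  · have hm0 : (m : ℝ) ≠ 0 := by positivity
    have h3' : (3 : ℝ) ≤ (m : ℝ) := by exact_mod_cast h3
    set R := !![4 * c ^ 2 - 1, -(2 * c); 2 * c, -1] with hR
    set φ : ℝ := 2 * (π / m) with hφ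
    have hcosφ : Real.cos φ = 2 * c ^ 2 - 1 := by rw [hφ, Real.cos_two_mul, hc]
    have hRsq : R * R = (2 * Real.cos φ) • R - 1 := by
      rw [hcosφ]
      ext i j
      fin_cases i <;> fin_cases j <;>
        simp [hR, Matrix.mul_apply, Fin.sum_univ_two, Matrix.one_apply] <;> ring
    have key : ∀ n : ℕ, Real.sin φ • R ^ (n + 1)
        = Real.sin (((n : ℝ) + 1) * φ) • R
          - Real.sin ((n : ℝ) * φ) • (1 : Matrix (Fin 2) (Fin 2) ℝ) := by
      intro n
      induction n with
      | zero => simp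
      | succ n ih =>
        have hsin : Real.sin (((n : ℝ) + 1 + 1) * φ)
            = 2 * Real.cos φ * Real.sin (((n : ℝ) + 1) * φ) - Real.sin ((n : ℝ) * φ) := by
          have e1 : ((n : ℝ) + 1 + 1) * φ = ((n : ℝ) + 1) * φ + φ := by ring
          have e2 : (n : ℝ) * φ = ((n : ℝ) + 1) * φ - φ := by ring
          rw [e1, e2, Real.sin_add, Real.sin_sub]
          ring
        have hstep : Real.sin φ • R ^ (n + 1 + 1) = (Real.sin φ • R ^ (n + 1)) * R := by
          rw [pow_succ, Matrix.smul_mul]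
        rw [hstep, ih, Matrix.sub_mul, Matrix.smul_mul, Matrix.smul_mul, hRsq,
          Matrix.one_mul]
        push_cast
        rw [hsin]
        module
    have hsinφ : Real.sin φ ≠ 0 := by
      have h1 : 0 < φ := by rw [hφ]; positivity
      have h2 : φ < π := by
        have e : φ = 2 * π / m := by rw [hφ]; ring
        rw [e, div_lt_iff₀ (by positivity : (0:ℝ) < (m:ℝ))]
        nlinarith [Real.pi_pos]
      exact ne_of_gt (Real.sin_pos_of_pos_of_lt_pi h1 h2)
    have hm1 : m - 1 + 1 = m := by omega
    have hcast : ((m - 1 : ℕ) : ℝ) = (m : ℝ) - 1 := by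
      have := Nat.cast_sub (show 1 ≤ m by omega) (R := ℝ)
      simpa using this
    have hthis := key (m - 1)
    rw [hm1, hcast] at hthis
    have hmφ : ((m : ℝ) - 1 + 1) * φ = 2 * π := by
      rw [hφ]; field_simp; ring
    have hm1φ : ((m : ℝ) - 1) * φ = 2 * π - φ := by
      rw [hφ]; field_simp
    rw [hmφ, hm1φ, Real.sin_two_pi, Real.sin_two_pi_sub] at hthis
    simp only [zero_smul, zero_sub, neg_smul, neg_neg] at hthis
    exact smul_right_injective (Matrix (Fin 2) (Fin 2) ℝ) hsinφ hthis

variable {B : Type*} (M : CoxeterMatrix B)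

/-- Entries of the cosine matrix of the standard bilinear form. -/
noncomputable def kk (a b : B) : ℝ := if M a b = 0 then -1 else -Real.cos (π / M a b)

/-- Pairing of a vector with the simple root `α_a`. -/
noncomputable def pa (a : B) : (B →₀ ℝ) →ₗ[ℝ] ℝ := Finsupp.linearCombination ℝ (kk M a)

lemma pa_single (a b : B) (r : ℝ) : pa M a (Finsupp.single b r) = r * kk M a b := by
  simp [pa, Finsupp.linearCombination_single, smul_eq_mul]

/-- The geometric reflection associated with a simple generator. -/
noncomputable def sig (a : B) : Module.End ℝ (B →₀ ℝ) :=
  LinearMap.id - (LinearMap.smulRight ((2:ℝ) • pa M a) (Finsupp.single a 1))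

lemma sig_apply (a : B) (v : B →₀ ℝ) :
    sig M a v = v - (2 * pa M a v) • Finsupp.single a 1 := by
  simp [sig, smul_smul]

lemma sig_fix {a : B} {v : B →₀ ℝ} (h : pa M a v = 0) : sig M a v = v := by
  rw [sig_apply, h]; simp

lemma kk_self (a : B) : kk M a a = 1 := by rw [kk, M.diagonal a]; norm_num

lemma sig_sq (a : B) : sig M a * sig M a = 1 := by
  refine LinearMap.ext fun v => ?_
  simp only [Module.End.mul_apply, sig_apply, map_sub, map_smul, pa_single, kk_self,
    smul_eq_mul, Module.End.one_apply]
  match_scalars <;> ring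

/-- The dihedral relations hold for the geometric reflections. -/
lemma sig_mul_sig_pow (a b : B) (hab : a ≠ b) (h0 : M a b ≠ 0) :
    (sig M a * sig M b) ^ (M a b) = 1 := by
  set m := M a b with hm
  have hm2 : 2 ≤ m := by
    have := M.off_diagonal a b hab
    omega
  set c : ℝ := Real.cos (π / m) with hc
  have hkab : kk M a b = -c := by rw [kk, if_neg h0]
  have hkba : kk M b a = -c := by
    rw [kk, if_neg (by rwa [M.symmetric b a]), M.symmetric b a]
  have hkaa : kk M a a = 1 := kk_self M a
  have hkbb : kk M b b = 1 := kk_self M b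
  have hm2' : (2:ℝ) ≤ (m:ℝ) := by exact_mod_cast hm2
  have hmpos : (0:ℝ) < (m:ℝ) := by linarith
  have hs : 0 < Real.sin (π / m) := by
    apply Real.sin_pos_of_pos_of_lt_pi
    · positivity
    · rw [div_lt_iff₀ hmpos]
      nlinarith [Real.pi_pos]
  have hD : 1 - c ^ 2 ≠ 0 := by
    have h1 : Real.sin (π / m) ^ 2 + Real.cos (π / m) ^ 2 = 1 := Real.sin_sq_add_cos_sq _
    rw [hc]
    nlinarith
  set R : Matrix (Fin 2) (Fin 2) ℝ := !![4 * c ^ 2 - 1, -(2 * c); 2 * c, -1] with hR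
  have hRm : R ^ m = 1 := R_pow_eq_one hm2
  set ψ : (Fin 2 → ℝ) → (B →₀ ℝ) := fun w =>
    w 0 • Finsupp.single a 1 + w 1 • Finsupp.single b 1 with hψ
  have hpaψ : ∀ w, pa M a (ψ w) = w 0 - c * w 1 := by
    intro w
    simp only [hψ, map_add, map_smul, pa_single, hkab, hkaa, smul_eq_mul]
    ring
  have hpbψ : ∀ w, pa M b (ψ w) = w 1 - c * w 0 := by
    intro w
    simp only [hψ, map_add, map_smul, pa_single, hkba, hkbb, smul_eq_mul]
    ring
  have hrho : ∀ w, (sig M a * sig M b) (ψ w) = ψ (R.mulVec w) := by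
    intro w
    rw [Module.End.mul_apply]
    have h1 : (sig M b) (ψ w)
        = w 0 • Finsupp.single a 1 + (2 * c * w 0 - w 1) • Finsupp.single b 1 := by
      rw [sig_apply, hpbψ]
      simp only [hψ]
      module
    rw [h1]
    have h2 : pa M a (w 0 • Finsupp.single a 1 + (2 * c * w 0 - w 1) • Finsupp.single b 1)
        = w 0 - c * (2 * c * w 0 - w 1) := by
      simp only [map_add, map_smul, pa_single, hkab, hkaa, smul_eq_mul]
      ring
    rw [sig_apply, h2]
    have hmv : R.mulVec w = ![(4 * c ^ 2 - 1) * w 0 - 2 * c * w 1, 2 * c * w 0 - w 1] := by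
      funext l
      fin_cases l <;>
        simp [hR, Matrix.mulVec, dotProduct, Fin.sum_univ_two] <;> ring
    rw [hmv]
    simp only [hψ, Matrix.cons_val_zero, Matrix.cons_val_one, Matrix.head_cons]
    module
  refine LinearMap.ext fun v => ?_
  set x := pa M a v with hx
  set y := pa M b v with hy
  set w0 : Fin 2 → ℝ := ![(x + c * y) / (1 - c ^ 2), (y + c * x) / (1 - c ^ 2)] with hw0
  set z : B →₀ ℝ := v - ψ w0 with hz
  have hza : pa M a z = 0 := by
    rw [hz, map_sub, hpaψ, ← hx]
    simp only [hw0, Matrix.cons_val_zero, Matrix.cons_val_one, Matrix.head_cons]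
    field_simp
    ring
  have hzb : pa M b z = 0 := by
    rw [hz, map_sub, hpbψ, ← hy]
    simp only [hw0, Matrix.cons_val_zero, Matrix.cons_val_one, Matrix.head_cons]
    field_simp
    ring
  have hfix : ∀ n : ℕ, ((sig M a * sig M b) ^ n) v = z + ψ ((R ^ n).mulVec w0) := by
    intro n
    induction n with
    | zero => simp [hz, Matrix.one_mulVec]
    | succ n ih =>
      rw [pow_succ', Module.End.mul_apply, ih, map_add]
      have hfz : (sig M a * sig M b) z = z := by
        rw [Module.End.mul_apply, sig_fix M hzb, sig_fix M hza]
      rw [hfz, hrho, pow_succ', Matrix.mulVec_mulVec]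
  have hfin := hfix m
  rw [hRm, Matrix.one_mulVec] at hfin
  rw [hfin, hz]
  simp

/-- Liftability of the geometric representation. -/
lemma isLiftable : M.IsLiftable (sig M) := by
  intro a b
  rcases eq_or_ne a b with rfl | hab
  · rw [M.diagonal a, pow_one, sig_sq]
  · rcases eq_or_ne (M a b) 0 with h0 | h0
    · rw [h0, pow_zero]
    · exact sig_mul_sig_pow M a b hab h0

/-- Linear combinations of three simple basis vectors. -/
noncomputable def cmb (i j k : B) (α β γ : ℝ) : B →₀ ℝ :=
  α • Finsupp.single i 1 + β • Finsupp.single j 1 + γ • Finsupp.single k 1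

lemma cos_ge_half {m : ℕ} (hm : 3 ≤ m) : 1/2 ≤ Real.cos (π / m) := by
  have hm' : (3:ℝ) ≤ (m:ℝ) := by exact_mod_cast hm
  have h1 : π / m ≤ π / 3 :=
    div_le_div_of_nonneg_left Real.pi_pos.le (by norm_num) hm'
  have h2 : (0:ℝ) ≤ π / m := by positivity
  have h3 : π / 3 ≤ π := by nlinarith [Real.pi_pos]
  calc (1:ℝ)/2 = Real.cos (π/3) := by rw [Real.cos_pi_div_three]
    _ ≤ Real.cos (π/m) := Real.cos_le_cos_of_nonneg_of_le_pi h2 h3 h1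

end Statement7Aux

open Statement7Aux

set_option maxHeartbeats 2000000 in
/-- Let `(W,S)` be a Coxeter system and `s_i, s_j, s_k` three distinct
generators such that the orders `m i j`, `m i k`, `m k j` are each finite and odd (`0` encodes
`∞`).  Then `s_j s_k s_j` and `s_k s_i s_k s_i s_k` generate an infinite dihedral group;
equivalently, their product has infinite order in `W`. -/
theorem statement7 {B : Type*} {M : CoxeterMatrix B} {W : Type*} [Group W]
    (cs : CoxeterSystem M W)
    (i j k : B) (hij : i ≠ j) (hik : i ≠ k) (hjk : j ≠ k)
    (hmij : M i j ≠ 0) (hmij' : Odd (M i j))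
    (hmik : M i k ≠ 0) (hmik' : Odd (M i k))
    (hmkj : M k j ≠ 0) (hmkj' : Odd (M k j)) :
    ¬ IsOfFinOrder ((cs.simple j * cs.simple k * cs.simple j) *
      (cs.simple k * cs.simple i * cs.simple k * cs.simple i * cs.simple k)) := by
  -- the entries are at least 3
  have h3ij : 3 ≤ M i j := by
    have := M.off_diagonal i j hij
    obtain ⟨c, hc⟩ := hmij'
    omega
  have h3ik : 3 ≤ M i k := by
    have := M.off_diagonal i k hik
    obtain ⟨c, hc⟩ := hmik'
    omega
  have h3kj : 3 ≤ M k j := by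
    have := M.off_diagonal k j (Ne.symm hjk)
    obtain ⟨c, hc⟩ := hmkj'
    omega
  set c1 : ℝ := Real.cos (π / M i j) with hc1
  set c2 : ℝ := Real.cos (π / M i k) with hc2
  set c3 : ℝ := Real.cos (π / M k j) with hc3
  have hc1h : 1/2 ≤ c1 := cos_ge_half h3ij
  have hc2h : 1/2 ≤ c2 := cos_ge_half h3ik
  have hc3h : 1/2 ≤ c3 := cos_ge_half h3kj
  -- kk values
  have hsymm : ∀ a b : B, M a b = M b a := fun a b => M.symmetric a b
  have hkij : kk M i j = -c1 := by rw [kk, if_neg hmij]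
  have hkji : kk M j i = -c1 := by rw [kk, hsymm j i, if_neg hmij]
  have hkik : kk M i k = -c2 := by rw [kk, if_neg hmik]
  have hkki : kk M k i = -c2 := by rw [kk, hsymm k i, if_neg hmik]
  have hkkj : kk M k j = -c3 := by rw [kk, if_neg hmkj]
  have hkjk : kk M j k = -c3 := by rw [kk, hsymm j k, if_neg hmkj]
  have hkii : kk M i i = 1 := kk_self M i
  have hkjj : kk M j j = 1 := kk_self M j
  have hkkk : kk M k k = 1 := kk_self M k
  -- the three reflection actions on the span of the three simple roots
  have appI : ∀ α β γ : ℝ, sig M i (cmb i j k α β γ)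
      = cmb i j k (α - 2*(α - c1*β - c2*γ)) β γ := by
    intro α β γ
    rw [sig_apply]
    have hp : pa M i (cmb i j k α β γ) = α - c1*β - c2*γ := by
      simp only [cmb, map_add, map_smul, pa_single, smul_eq_mul, hkii, hkij, hkik]
      ring
    rw [hp]
    simp only [cmb]
    module
  have appJ : ∀ α β γ : ℝ, sig M j (cmb i j k α β γ)
      = cmb i j k α (β - 2*(-c1*α + β - c3*γ)) γ := by
    intro α β γ
    rw [sig_apply]
    have hp : pa M j (cmb i j k α β γ) = -c1*α + β - c3*γ := by
      simp only [cmb, map_add, map_smul, pa_single, smul_eq_mul, hkji, hkjj, hkjk]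
      ring
    rw [hp]
    simp only [cmb]
    module
  have appK : ∀ α β γ : ℝ, sig M k (cmb i j k α β γ)
      = cmb i j k α β (γ - 2*(-c2*α - c3*β + γ)) := by
    intro α β γ
    rw [sig_apply]
    have hp : pa M k (cmb i j k α β γ) = -c2*α - c3*β + γ := by
      simp only [cmb, map_add, map_smul, pa_single, smul_eq_mul, hkki, hkkj, hkkk]
      ring
    rw [hp]
    simp only [cmb]
    module
  set F : ℝ := 1 - 2*c2^2 + 4*c1*c2*c3 + 2*c3^2*(4*c2^2-1) with hFdef
  have hF : 1 ≤ F := by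
    rw [hFdef]
    have hc2p : (0:ℝ) ≤ c2 := by linarith
    have hc3p : (0:ℝ) ≤ c3 := by linarith
    have k0 : 0 ≤ (2*c1 - 1) * (2*c2*c3) :=
      mul_nonneg (by linarith) (by nlinarith [mul_nonneg hc2p hc3p])
    have k1 : c3 * (c3 - c2) ≤ c3 * (c3 - 1/2) := by nlinarith
    have k2 : c3^2 - 1/4 ≤ c2^2 * (4*c3^2 - 1) :=
      calc c3^2 - 1/4 = (1/4) * (4*c3^2 - 1) := by ring
        _ ≤ c2^2 * (4*c3^2 - 1) :=
          mul_le_mul_of_nonneg_right (by nlinarith) (by nlinarith)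
    nlinarith
  -- the representation
  set t : Module.End ℝ (B →₀ ℝ) :=
    sig M j * sig M k * sig M j * (sig M k * sig M i * sig M k * sig M i * sig M k) with ht
  have ht1 : t (cmb i j k 0 (2*c3) 1)
      = (4*F^2-1) • cmb i j k 0 (2*c3) 1 + (2*F) • cmb i j k (2*c2) 0 (4*c2^2-1) := by
    rw [ht]
    simp only [Module.End.mul_apply]
    rw [appK, appI, appK, appI, appK, appJ, appK, appJ]
    simp only [cmb]
    match_scalars <;> (rw [hFdef]; ring)
  have ht2 : t (cmb i j k (2*c2) 0 (4*c2^2-1))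
      = (-(2*F)) • cmb i j k 0 (2*c3) 1 + (-1 : ℝ) • cmb i j k (2*c2) 0 (4*c2^2-1) := by
    rw [ht]
    simp only [Module.End.mul_apply]
    rw [appK, appI, appK, appI, appK, appJ, appK, appJ]
    simp only [cmb]
    match_scalars <;> (rw [hFdef]; ring)
  -- growth of coefficients under iteration
  have step : ∀ aa bb : ℝ, t (aa • cmb i j k 0 (2*c3) 1 + bb • cmb i j k (2*c2) 0 (4*c2^2-1))
      = (aa*(4*F^2-1) - bb*(2*F)) • cmb i j k 0 (2*c3) 1
        + (aa*(2*F) - bb) • cmb i j k (2*c2) 0 (4*c2^2-1) := by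
    intro aa bb
    rw [map_add, map_smul, map_smul, ht1, ht2]
    module
  have key : ∀ n : ℕ, ∃ aa bb : ℝ, (t ^ n) (cmb i j k 0 (2*c3) 1)
      = aa • cmb i j k 0 (2*c3) 1 + bb • cmb i j k (2*c2) 0 (4*c2^2-1)
      ∧ bb + 1 ≤ aa ∧ 0 ≤ bb ∧ (n = 0 ∨ 2 ≤ bb) := by
    intro n
    induction n with
    | zero =>
      refine ⟨1, 0, ?_, by norm_num, le_refl 0, Or.inl rfl⟩
      simp
    | succ n ih =>
      obtain ⟨aa, bb, heq, hab, hb0, _⟩ := ih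
      refine ⟨aa*(4*F^2-1) - bb*(2*F), aa*(2*F) - bb, ?_, ?_, ?_, ?_⟩
      · rw [pow_succ', Module.End.mul_apply, heq, step]
      · have h1' : (1:ℝ) ≤ 2*F - 1 := by linarith
        have h2' : (1:ℝ) ≤ (2*F + 1)*aa - bb := by nlinarith
        have := mul_le_mul h1' h2' (by linarith) (by linarith)
        nlinarith
      · nlinarith
      · right
        nlinarith
  -- conclusion
  intro hford
  obtain ⟨n, hn, hwn⟩ := isOfFinOrder_iff_pow_eq_one.mp hford
  set φW : W →* Module.End ℝ (B →₀ ℝ) := cs.lift ⟨sig M, isLiftable M⟩ with hφW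
  have himg : φW ((cs.simple j * cs.simple k * cs.simple j) *
      (cs.simple k * cs.simple i * cs.simple k * cs.simple i * cs.simple k)) = t := by
    rw [ht, hφW]
    simp only [map_mul, CoxeterSystem.lift_apply_simple]
  have htn : t ^ n = 1 := by
    rw [← himg, ← map_pow, hwn, map_one]
  obtain ⟨aa, bb, heq, hab, hb0, hb2⟩ := key n
  rw [htn, Module.End.one_apply] at heq
  have hb2' : 2 ≤ bb := hb2.resolve_left (by omega)
  -- evaluate both sides at the coordinate `i`
  have hcoord := congrArg (fun f : B →₀ ℝ => f i) heq
  simp only [cmb, Finsupp.add_apply, Finsupp.smul_apply, smul_eq_mul,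
    Finsupp.single_eq_same, Finsupp.single_eq_of_ne hij,
    Finsupp.single_eq_of_ne hik] at hcoord
  -- hcoord : 0 = bb * (2*c2) (approximately); derive contradiction
  nlinarith [hcoord]
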